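/- The set of neighbours of the alternating permutation code equals the set of neighbours of the full symmetric permutation code: Γ₁(C(A_q)) = Γ₁(C(S_q)). -/

import Mathlib

def permCode {q : ℕ} (T : Set (Equiv.Perm (Fin q))) : Set (Fin q → Fin q) :=
  {v | ∃ g ∈ T, v = fun i => g i}

def codeNbrs {m q : ℕ} (C : Set (Fin m → Fin q)) : Set (Fin m → Fin q) :=
  {v | v ∉ C ∧ ∃ c ∈ C, hammingDist v c = 1}

lemma dist_one_iff {q : ℕ} (v c : Fin q → Fin q) :
    hammingDist v c = 1 ↔ ∃ j, v j ≠ c j ∧ ∀ i, i ≠ j → v i = c i := by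
  rw [hammingDist, Finset.card_eq_one]
  constructor
  · rintro ⟨j, hj⟩
    have hmem : j ∈ Finset.univ.filter fun i => v i ≠ c i := hj ▸ Finset.mem_singleton_self j
    refine ⟨j, (Finset.mem_filter.mp hmem).2, fun i hi => ?_⟩
    by_contra h
    have : i ∈ ({j} : Finset (Fin q)) := hj ▸ Finset.mem_filter.mpr ⟨Finset.mem_univ i, h⟩
    exact hi (Finset.mem_singleton.mp this)
  · rintro ⟨j, hj, hrest⟩
    refine ⟨j, Finset.ext fun i => ?_⟩
    simp only [Finset.mem_filter, Finset.mem_univ, true_and, Finset.mem_singleton]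
    constructor
    · intro h; by_contra hij; exact h (hrest i hij)
    · rintro rfl; exact hj

lemma perm_not_dist_one {q : ℕ} (h g : Equiv.Perm (Fin q)) :
    hammingDist (fun i => h i) (fun i => g i) ≠ 1 := by
  intro hd
  obtain ⟨j, hj, hrest⟩ := (dist_one_iff _ _).mp hd
  obtain ⟨k, hk⟩ := h.surjective (g j)
  have hkj : k ≠ j := fun e => hj (e ▸ hk)
  have : h k = g k := hrest k hkj
  exact hkj (g.injective (this ▸ hk))

theorem stmt7 (q : ℕ) (hq : 3 ≤ q) :
    codeNbrs (permCode (alternatingGroup (Fin q) : Set (Equiv.Perm (Fin q))))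
      = codeNbrs (permCode (Set.univ : Set (Equiv.Perm (Fin q)))) := by
  ext v
  simp only [codeNbrs, permCode, Set.mem_setOf_eq]
  constructor
  · rintro ⟨hv, c, ⟨g, hg, rfl⟩, hd⟩
    refine ⟨?_, _, ⟨g, Set.mem_univ g, rfl⟩, hd⟩
    rintro ⟨h, -, rfl⟩
    exact perm_not_dist_one h g hd
  · rintro ⟨hv, c, ⟨g, -, rfl⟩, hd⟩
    have hvA : ¬ ∃ h ∈ (alternatingGroup (Fin q) : Set (Equiv.Perm (Fin q))), v = fun i => h i := by
      rintro ⟨h, -, rfl⟩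
      exact hv ⟨h, Set.mem_univ h, rfl⟩
    by_cases hg : g ∈ alternatingGroup (Fin q)
    · exact ⟨hvA, _, ⟨g, hg, rfl⟩, hd⟩
    · obtain ⟨j, hj, hrest⟩ := (dist_one_iff _ _).mp hd
      set b := v j with hb
      set h : Equiv.Perm (Fin q) := Equiv.swap (g j) b * g with hh
      have hbne : b ≠ g j := hj
      have hmem : h ∈ alternatingGroup (Fin q) := by
        rw [Equiv.Perm.mem_alternatingGroup, hh, map_mul,
          Equiv.Perm.sign_swap (Ne.symm hbne)]
        have : Equiv.Perm.sign g = -1 := by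
          rcases Int.units_eq_one_or (Equiv.Perm.sign g) with h1 | h1
          · exact absurd (Equiv.Perm.mem_alternatingGroup.mpr h1) hg
          · exact h1
        rw [this]; decide
      set k := g.symm b with hk
      have hgk : g k = b := g.apply_symm_apply b
      have hkj : k ≠ j := fun e => hbne (e ▸ hgk).symm
      refine ⟨hvA, _, ⟨h, hmem, rfl⟩, (dist_one_iff _ _).mpr ⟨k, ?_, ?_⟩⟩
      · have : h k = g j := by
          simp only [hh, Equiv.Perm.mul_apply, hgk, Equiv.swap_apply_right]
        rw [this, hrest k hkj, hgk]
        exact hbne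
      · intro i hik
        by_cases hij : i = j
        · subst hij
          simp only [hh, Equiv.Perm.mul_apply, Equiv.swap_apply_left]; rfl
        · have h1 : g i ≠ g j := fun e => hij (g.injective e)
          have h2 : g i ≠ b := fun e => hik (by rw [hk, ← e, Equiv.symm_apply_apply])
          have : h i = g i := by
            simp only [hh, Equiv.Perm.mul_apply, Equiv.swap_apply_of_ne_of_ne h1 h2]
          rw [this]; exact hrest i hij
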